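/- Let G be a finite connected simple graph in which every vertex has degree at least 2 and some vertex has degree at least 3. Then for every ordered pair of darts (d, e) of G there exists a walk in G whose sequence of darts begins with d, ends with e, and in which no dart is immediately followed by its reverse (a non-backtracking walk). -/

import Mathlib

open SimpleGraph List Finset

section NBWalk

variable {V : Type*} {G : SimpleGraph V}

/-- `NBW G d e` : there is a non-backtracking walk whose dart sequence begins with `d`
and ends with `e`. -/
def NBW (G : SimpleGraph V) (d e : G.Dart) : Prop :=
  ∃ p : G.Walk d.fst e.snd, p.darts.head? = some d ∧ p.darts.getLast? = some e ∧
    List.Chain' (fun a b : G.Dart => b ≠ a.symm) p.darts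

lemma NBW.refl (d : G.Dart) : NBW G d d :=
  ⟨Walk.cons d.adj Walk.nil, rfl, rfl, List.isChain_singleton _⟩

lemma NBW.base {d e : G.Dart} (h1 : d.snd = e.fst) (h2 : e ≠ d.symm) : NBW G d e := by
  obtain ⟨⟨a, b⟩, hab⟩ := d
  obtain ⟨⟨b', c⟩, hbc⟩ := e
  dsimp at h1
  subst h1
  exact ⟨Walk.cons hab (Walk.cons hbc Walk.nil), rfl, rfl, by
    simpa [List.Chain', List.isChain_cons_cons] using h2⟩

lemma NBW.trans {d e f : G.Dart} (h1 : NBW G d e) (h2 : NBW G e f) : NBW G d f := by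
  obtain ⟨⟨⟨e1, e2⟩, he⟩, hd, hf⟩ : ∃ e' : G.Dart, NBW G d e' ∧ NBW G e' f := ⟨e, h1, h2⟩
  obtain ⟨p, hp1, hp2, hp3⟩ := hd
  obtain ⟨q, hq1, hq2, hq3⟩ := hf
  cases q with
  | nil => simp at hq1
  | @cons _ u _ h q₂ =>
    rw [Walk.darts_cons] at hq1 hq2 hq3
    simp only [List.head?_cons, Option.some.injEq] at hq1
    have hu : u = e2 := congrArg (fun x => x.toProd.2) hq1
    subst hu
    refine ⟨p.append q₂, ?_, ?_, ?_⟩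
    · rw [Walk.darts_append, List.head?_append, hp1]; rfl
    · rw [Walk.darts_append, List.getLast?_append]
      cases hq : q₂.darts.getLast? with
      | none =>
        rw [List.getLast?_eq_none_iff] at hq
        rw [hq] at hq2
        simp at hq2
        rw [Option.none_or, hp2, ← hq1, hq2]
      | some g =>
        rw [← List.singleton_append, List.getLast?_append, hq] at hq2
        simp only [Option.or] at hq2 ⊢
        exact hq2
    · rw [Walk.darts_append, List.Chain', List.isChain_append]
      rw [List.Chain', List.isChain_cons] at hq3
      refine ⟨hp3, hq3.2, ?_⟩
      intro x hx y hy
      rw [hp2] at hx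
      simp only [Option.mem_def, Option.some.injEq] at hx
      subst hx
      have := hq3.1 y hy
      rwa [hq1] at this

lemma NBW.rev {d e : G.Dart} (h : NBW G d e) : NBW G e.symm d.symm := by
  obtain ⟨p, hp1, hp2, hp3⟩ := h
  refine ⟨p.reverse, ?_, ?_, ?_⟩
  · erw [Walk.darts_reverse]; rw [List.head?_reverse, List.getLast?_map]; erw [hp2]; rfl
  · erw [Walk.darts_reverse]; rw [List.getLast?_reverse, List.head?_map]; erw [hp1]; rfl
  · erw [Walk.darts_reverse]; rw [List.Chain', List.isChain_reverse, List.isChain_map]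
    refine hp3.imp ?_
    intro a b hab
    try simp only [flip]
    intro hcon
    rw [Dart.symm_symm] at hcon
    exact hab hcon.symm

lemma NBW.extend {d e f : G.Dart} (h : NBW G d e) (h1 : f.fst = e.snd) (h2 : f ≠ e.symm) :
    NBW G d f :=
  h.trans (NBW.base h1.symm h2)

/-- The set of darts reachable from `d` by non-backtracking extension. -/
inductive NBRel (G : SimpleGraph V) (d : G.Dart) : G.Dart → Prop
  | base : NBRel G d d
  | step {e f : G.Dart} : NBRel G d e → f.fst = e.snd → f ≠ e.symm → NBRel G d f

lemma NBRel.nbw {d e : G.Dart} (h : NBRel G d e) : NBW G d e := by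
  induction h with
  | base => exact NBW.refl d
  | step _ h1 h2 ih => exact ih.extend h1 h2

lemma NBRel.fst_mem {d e : G.Dart} (h : NBRel G d e) :
    e = d ∨ ∃ g, NBRel G d g ∧ e.fst = g.snd := by
  induction h with
  | base => exact Or.inl rfl
  | step hg h1 _ _ => exact Or.inr ⟨_, hg, h1⟩

/-- The key "turning" lemma: one can reverse direction along a non-backtracking walk. -/
lemma NBW.turn [Fintype V] [DecidableEq V] [DecidableRel G.Adj]
    (hconn : G.Connected) (hdeg : ∀ v, 2 ≤ G.degree v) (hbig : ∃ v, 3 ≤ G.degree v)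
    (d : G.Dart) : NBW G d d.symm := by
  classical
  by_contra hcon
  -- no dart is reachable together with its reverse
  have hpair : ∀ e : G.Dart, NBRel G d e → NBRel G d e.symm → False := by
    intro e h1 h2
    have h3 := (h2.nbw).rev
    rw [Dart.symm_symm] at h3
    exact hcon ((h1.nbw).trans h3)
  set Sf : Finset G.Dart := Finset.univ.filter (fun e => NBRel G d e) with hSf
  have hmemS : ∀ e, e ∈ Sf ↔ NBRel G d e := by intro e; simp [hSf]
  set T : Finset V := Sf.image (fun e => e.snd) with hT
  -- A: each vertex of `T` has exactly one incoming reachable dart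
  have hA : ∀ v ∈ T, (Sf.filter (fun e => e.snd = v)).card = 1 := by
    intro v hv
    rw [Finset.card_eq_one]
    obtain ⟨e, heS, hev⟩ := Finset.mem_image.mp hv
    refine ⟨e, ?_⟩
    ext g
    simp only [Finset.mem_filter, Finset.mem_singleton]
    constructor
    · rintro ⟨hgS, hgv⟩
      by_contra hge
      have hsym : g.symm ≠ e.symm := fun h => hge (by
        have h' := congrArg Dart.symm h
        rwa [Dart.symm_symm, Dart.symm_symm] at h')
      have hgs : NBRel G d g.symm :=
        NBRel.step ((hmemS e).mp heS) (hgv.trans hev.symm) hsym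
      exact hpair g ((hmemS g).mp hgS) hgs
    · rintro rfl; exact ⟨heS, hev⟩
  -- B: each vertex of `T` has `degree - 1` outgoing reachable darts
  have hB : ∀ v ∈ T, (Sf.filter (fun e => e.fst = v)).card = G.degree v - 1 := by
    intro v hv
    obtain ⟨e, heS, hev⟩ := Finset.mem_image.mp hv
    have he' : NBRel G d e := (hmemS e).mp heS
    have hfil : Sf.filter (fun f => f.fst = v)
        = (Finset.univ.filter (fun f : G.Dart => f.fst = v)).erase e.symm := by
      ext f
      simp only [Finset.mem_filter, Finset.mem_erase, Finset.mem_univ, true_and, hmemS]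
      constructor
      · rintro ⟨hf, hfv⟩
        refine ⟨fun hfe => ?_, hfv⟩
        exact hpair e he' (hfe ▸ hf)
      · rintro ⟨hfe, hfv⟩
        exact ⟨NBRel.step he' (hfv.trans hev.symm) hfe, hfv⟩
    have hmem : e.symm ∈ Finset.univ.filter (fun f : G.Dart => f.fst = v) := by
      simp only [Finset.mem_filter, Finset.mem_univ, true_and]
      exact hev
    rw [hfil, Finset.card_erase_of_mem hmem, dart_fst_fiber_card_eq_degree]
  -- C: |Sf| = |T|
  have hC : Sf.card = T.card := by
    have h := Finset.card_eq_sum_card_fiberwise (f := fun e : G.Dart => e.snd) (t := T)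
      (s := Sf) (fun e he => Finset.mem_image_of_mem _ he)
    rw [h, Finset.sum_congr rfl hA, Finset.sum_const, smul_eq_mul, mul_one]
  have hdS : d ∈ Sf := (hmemS d).mpr NBRel.base
  have hdT' : d.snd ∈ T := Finset.mem_image_of_mem _ hdS
  have hfstT : ∀ e ∈ Sf, e = d ∨ e.fst ∈ T := by
    intro e he
    rcases ((hmemS e).mp he).fst_mem with rfl | ⟨g, hg, hfg⟩
    · exact Or.inl rfl
    · exact Or.inr (by rw [hfg]; exact Finset.mem_image_of_mem _ ((hmemS g).mpr hg))
  by_cases hdf : d.fst ∈ T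
  · -- tails of reachable darts all lie in T; count both ways
    have hfib : ∀ e ∈ Sf, e.fst ∈ T := by
      intro e he
      rcases hfstT e he with rfl | h
      · exact hdf
      · exact h
    have hsum : Sf.card = ∑ v ∈ T, (G.degree v - 1) := by
      have h := Finset.card_eq_sum_card_fiberwise (f := fun e : G.Dart => e.fst) (t := T)
        (s := Sf) hfib
      rw [h]
      exact Finset.sum_congr rfl hB
    have hdeg2 : ∀ v ∈ T, G.degree v = 2 := by
      by_contra hne
      push_neg at hne
      obtain ⟨v0, hv0T, hv0⟩ := hne
      have hlt : ∑ _v ∈ T, 1 < ∑ v ∈ T, (G.degree v - 1) :=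
        Finset.sum_lt_sum (fun i _ => by have := hdeg i; omega)
          ⟨v0, hv0T, by have := hdeg v0; omega⟩
      have h1 : T.card = ∑ _v ∈ T, 1 := by simp
      omega
    -- T is closed under adjacency
    have hclosed : ∀ v ∈ T, ∀ u, G.Adj v u → u ∈ T := by
      intro v hv u hadj
      obtain ⟨e, heS, hev⟩ := Finset.mem_image.mp hv
      by_cases hfe : (⟨(v, u), hadj⟩ : G.Dart) = e.symm
      · have hu : u = e.fst := congrArg (fun x => x.toProd.2) hfe
        rcases hfstT e heS with rfl | h
        · rw [hu]; exact hdf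
        · rw [hu]; exact h
      · have hfS : (⟨(v, u), hadj⟩ : G.Dart) ∈ Sf :=
          (hmemS _).mpr (NBRel.step ((hmemS e).mp heS) hev.symm hfe)
        exact Finset.mem_image_of_mem _ hfS
    have hwalk : ∀ (a b : V), G.Walk a b → a ∈ T → b ∈ T := by
      intro a b p
      induction p with
      | nil => exact id
      | cons h p ih => intro ha; exact ih (hclosed _ ha _ h)
    obtain ⟨v0, hv0⟩ := hbig
    have hv0T : v0 ∈ T := (hconn.preconnected d.snd v0).elim fun w => hwalk _ _ w hdT'
    have := hdeg2 v0 hv0T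
    omega
  · -- d.fst is an extra tail outside T : contradiction by counting
    have hfib : ∀ e ∈ Sf, e.fst ∈ insert d.fst T := by
      intro e he
      rcases hfstT e he with rfl | h
      · exact Finset.mem_insert_self _ _
      · exact Finset.mem_insert_of_mem h
    have hsum : Sf.card = (Sf.filter (fun e => e.fst = d.fst)).card
        + ∑ v ∈ T, (G.degree v - 1) := by
      have h := Finset.card_eq_sum_card_fiberwise (f := fun e : G.Dart => e.fst)
        (t := insert d.fst T) (s := Sf) hfib
      rw [h, Finset.sum_insert hdf]
      congr 1
      exact Finset.sum_congr rfl hB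
    have h1 : 1 ≤ (Sf.filter (fun e => e.fst = d.fst)).card :=
      Finset.card_pos.mpr ⟨d, Finset.mem_filter.mpr ⟨hdS, rfl⟩⟩
    have h2 : T.card ≤ ∑ v ∈ T, (G.degree v - 1) := by
      rw [Finset.card_eq_sum_ones]
      exact Finset.sum_le_sum (fun i _ => by have := hdeg i; omega)
    omega

end NBWalk

/-- Appendix B, graph form. Let `G` be a finite connected simple graph in
which every vertex has degree at least `2` and some vertex has degree at least `3`.  Then for
every ordered pair of darts `(d, e)` there is a walk whose dart sequence begins with `d`,
ends with `e`, and never follows a dart immediately by its reverse (a non-backtracking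
walk); i.e. the non-backtracking line digraph of `G` is strongly connected. -/
theorem nonbacktracking_line_digraph_strongly_connected {V : Type*} [Fintype V]
    [DecidableEq V] (G : SimpleGraph V) [DecidableRel G.Adj]
    (hconn : G.Connected) (hdeg : ∀ v, 2 ≤ G.degree v) (hbig : ∃ v, 3 ≤ G.degree v) :
    ∀ d e : G.Dart, ∃ p : G.Walk d.fst e.snd,
      p.darts.head? = some d ∧ p.darts.getLast? = some e ∧
      List.Chain' (fun a b : G.Dart => b ≠ a.symm) p.darts := by
  intro d e
  have key : ∀ (v x : V) (w : G.Walk v x) (d : G.Dart), d.snd = v → x = e.fst → NBW G d e := by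
    intro v x w
    induction w with
    | nil =>
      intro d hd hx
      by_cases h : e = d.symm
      · rw [h]; exact NBW.turn hconn hdeg hbig d
      · exact NBW.base (hd.trans hx) h
    | @cons a b c hab p ih =>
      intro d hd hx
      have h1 : NBW G d (⟨(a, b), hab⟩ : G.Dart) := by
        by_cases hf : (⟨(a, b), hab⟩ : G.Dart) = d.symm
        · rw [hf]; exact NBW.turn hconn hdeg hbig d
        · exact NBW.base hd hf
      exact h1.trans (ih _ rfl hx)
  exact (hconn.preconnected d.snd e.fst).elim fun w => key d.snd e.fst w d rfl rfl
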